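/- Let P be a finitely generated torsion-free commutative cancellative monoid, A = ⊕_{p∈P} A_p a Noetherian P-graded ring, and E = ⊕_{p∈P^gp} E_p a finitely generated P^gp-graded A-module. Then E has a filtration 0 = E₀ ⊂ E₁ ⊂ ⋯ ⊂ E_n = E with each Eᵢ/Eᵢ₋₁ ≅ A/𝔭ᵢ for homogeneous prime ideals 𝔭ᵢ ⊂ A. -/

import Mathlib

open DirectSum

open AddSubmonoid in
lemma exists_total_cone {G : Type*} [AddCommGroup G]
    (htf : ∀ (n : ℕ) (g : G), 0 < n → n • g = 0 → g = 0) :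
    ∃ C : AddSubmonoid G, (∀ x ∈ C, -x ∈ C → x = 0) ∧ ∀ g : G, g ∈ C ∨ -g ∈ C := by
  classical
  set S : Set (AddSubmonoid G) := {C | ∀ x ∈ C, -x ∈ C → x = 0} with hS
  have chain : ∀ c ⊆ S, IsChain (· ≤ ·) c → ∀ y ∈ c,
      ∃ ub ∈ S, ∀ z ∈ c, z ≤ ub := by
    intro c hcS hchain y hyc
    refine ⟨sSup c, ?_, fun z hz => le_sSup hz⟩
    intro x hx hnx
    have hdir : Directed (· ≤ ·) (fun i : c => (i : AddSubmonoid G)) :=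
      hchain.directed.mono_comp _ (fun _ _ h => h)
    haveI : Nonempty c := ⟨⟨y, hyc⟩⟩
    rw [sSup_eq_iSup', mem_iSup_of_directed hdir] at hx hnx
    obtain ⟨⟨C₁, hC₁⟩, hx⟩ := hx
    obtain ⟨⟨C₂, hC₂⟩, hnx⟩ := hnx
    rcases hchain.total hC₁ hC₂ with h | h
    · exact hcS hC₂ x (h hx) hnx
    · exact hcS hC₁ x hx (h hnx)
  obtain ⟨C, -, hCS, hCmax⟩ := zorn_le_nonempty₀ S chain ⊥ (by
    intro x hx _; simpa using hx)
  refine ⟨C, hCS, ?_⟩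
  by_contra hg
  push_neg at hg
  obtain ⟨g, hg1, hg2⟩ := hg
  -- helper: extension by an element fails to be pointed gives a relation
  have key : ∀ u : G, u ∉ C → ¬ (C ⊔ closure {u}) ∈ S →
      ∃ k : ℕ, 0 < k ∧ ∃ c ∈ C, k • u = -c := by
    intro u hu hnot
    rw [hS, Set.mem_setOf_eq] at hnot
    push_neg at hnot
    obtain ⟨x, hx, hnx, hxne⟩ := hnot
    rw [AddSubmonoid.mem_sup] at hx hnx
    obtain ⟨c, hc, z, hz, rfl⟩ := hx
    obtain ⟨c', hc', z', hz', hsum⟩ := hnx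
    rw [AddSubmonoid.mem_closure_singleton] at hz hz'
    obtain ⟨n, rfl⟩ := hz
    obtain ⟨m, rfl⟩ := hz'
    rcases Nat.eq_zero_or_pos (n + m) with hnm | hnm
    · obtain ⟨rfl, rfl⟩ : n = 0 ∧ m = 0 := by omega
      simp only [zero_smul, add_zero] at hsum hxne
      exact absurd (hCS c hc (by rw [← hsum]; exact hc')) hxne
    · refine ⟨n + m, hnm, c + c', add_mem hc hc', ?_⟩
      have h2 : (c + c') + (n • u + m • u) = 0 := by
        rw [show (c + c') + (n • u + m • u) = c + n • u + (c' + m • u) by abel, hsum]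
        abel
      rw [add_smul]
      exact eq_neg_of_add_eq_zero_left (by rw [add_comm] at h2; exact h2)
  -- if the extension is pointed, contradiction with maximality
  have ext_fails : ∀ u : G, u ∉ C → ¬ (C ⊔ closure {u}) ∈ S := by
    intro u hu hmem
    have hle : C ≤ C ⊔ closure {u} := le_sup_left
    have heq : C ⊔ closure {u} = C := le_antisymm (hCmax hmem hle) hle
    apply hu
    rw [← heq]
    exact SetLike.le_def.mp le_sup_right (AddSubmonoid.mem_closure_singleton.mpr ⟨1, one_nsmul u⟩)
  obtain ⟨k, hk, c, hc, hkc⟩ := key g hg1 (ext_fails g hg1)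
  obtain ⟨k', hk', d, hd, hkd⟩ := key (-g) hg2 (ext_fails (-g) hg2)
  -- k • g = -c, k' • (-g) = -d  i.e.  k' • g = d
  have hkd' : k' • g = d := by
    have h := hkd; rw [smul_neg, neg_inj] at h; exact h
  have h1 : (k' * k) • g = -(k' • c) := by rw [mul_smul, hkc, smul_neg]
  have h2 : (k * k') • g = k • d := by rw [mul_smul, hkd']
  have h3 : k' • c ∈ C := AddSubmonoid.nsmul_mem _ hc k'
  have h4 : k • d ∈ C := AddSubmonoid.nsmul_mem _ hd k
  have h5 : k • d = -(k' • c) := by rw [← h2, mul_comm, h1]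
  have h6 : k • d = 0 := hCS _ h4 (by rw [h5, neg_neg]; exact h3)
  have h7 : (k * k') • g = 0 := by rw [h2, h6]
  have hgz : g = 0 := htf (k * k') g (Nat.mul_pos hk hk') h7
  exact hg1 (by rw [hgz]; exact zero_mem C)

theorem aux_graded_prime_filtration {ι : Type*} [AddCommMonoid ι] [LinearOrder ι] [IsOrderedCancelAddMonoid ι]
    [dec : DecidableEq ι]
    (A : Type*) [CommRing A] [IsNoetherianRing A]
    (𝒜 : ι → AddSubgroup A) [GradedRing 𝒜]
    (E : Type*) [AddCommGroup E] [Module A E] [Module.Finite A E]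
    (ℰ : ι → AddSubgroup E) [SetLike.GradedSMul 𝒜 ℰ] [DirectSum.Decomposition ℰ] :
    ∃ (n : ℕ) (M : Fin (n + 1) → Submodule A E), Monotone M ∧
      M 0 = ⊥ ∧ M (Fin.last n) = ⊤ ∧
      ∀ i : Fin n, ∃ 𝔭 : Ideal A, 𝔭.IsPrime ∧ Ideal.IsHomogeneous 𝒜 𝔭 ∧
        Nonempty ((↥(M i.succ) ⧸ (Submodule.comap (M i.succ).subtype (M i.castSucc)))
          ≃ₗ[A] (A ⧸ 𝔭)) := by
  cases Subsingleton.elim dec LinearOrder.toDecidableEq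
  haveI : IsNoetherian A E := isNoetherian_of_isNoetherianRing_of_finite A E
  set Good : Submodule A E → Prop := fun N =>
    (∀ x ∈ N, ∀ g : ι, (DirectSum.decompose ℰ x g : E) ∈ N) ∧
    ∃ (n : ℕ) (M : Fin (n + 1) → Submodule A E), Monotone M ∧
      M 0 = ⊥ ∧ M (Fin.last n) = N ∧
      ∀ i : Fin n, ∃ 𝔭 : Ideal A, 𝔭.IsPrime ∧ Ideal.IsHomogeneous 𝒜 𝔭 ∧
        Nonempty ((↥(M i.succ) ⧸ (Submodule.comap (M i.succ).subtype (M i.castSucc)))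
          ≃ₗ[A] (A ⧸ 𝔭)) with hGoodDef
  have hbot : Good ⊥ := by
    refine ⟨by simp, 0, fun _ => ⊥, monotone_const, rfl, rfl, fun i => i.elim0⟩
  obtain ⟨N, hN, hNmax⟩ :=
    set_has_maximal_iff_noetherian.mpr (inferInstance : IsNoetherian A E)
      {N | Good N} ⟨⊥, hbot⟩
  rcases eq_or_ne N ⊤ with rfl | hne
  · obtain ⟨-, n, M, h1, h2, h3, h4⟩ := hN
    exact ⟨n, M, h1, h2, h3, h4⟩
  exfalso
  obtain ⟨hNgr, n, M, hM1, hM2, hM3, hM4⟩ := hN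
  -- find a homogeneous element not in N
  have hcomp : ∃ (h : ι) (x : E), x ∈ ℰ h ∧ x ∉ N := by
    obtain ⟨y, hy⟩ : ∃ y : E, y ∉ N := by
      by_contra hcon; push_neg at hcon
      exact hne (eq_top_iff.mpr fun z _ => hcon z)
    by_contra hcon; push_neg at hcon
    apply hy
    haveI : ∀ (i : ι) (z : ℰ i), Decidable (z ≠ 0) := fun _ _ => Classical.dec _
    rw [← DirectSum.sum_support_decompose ℰ y]
    exact Submodule.sum_mem _ fun g _ => hcon g _ (DirectSum.decompose ℰ y g).2
  -- the set of colon ideals of homogeneous elements outside N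
  set T : Set (Ideal A) := {I | ∃ (h : ι) (x : E), x ∈ ℰ h ∧ x ∉ N ∧
    I = Submodule.comap (LinearMap.toSpanSingleton A E x) N} with hTdef
  have hTne : T.Nonempty := by
    obtain ⟨h, x, hx1, hx2⟩ := hcomp
    exact ⟨_, h, x, hx1, hx2, rfl⟩
  obtain ⟨J, hJT, hJmax⟩ :=
    set_has_maximal_iff_noetherian.mpr (inferInstance : IsNoetherian A A) T hTne
  obtain ⟨h, x, hxh, hxN, hJeq⟩ := hJT
  have hmemJ : ∀ a : A, a ∈ J ↔ a • x ∈ N := by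
    intro a
    rw [hJeq]
    simp [Submodule.mem_comap, LinearMap.toSpanSingleton_apply]
  -- key component computations
  have hsmul_mem : ∀ {i : ι} (a : 𝒜 i), (a : A) • x ∈ ℰ (i + h) := fun {i} a =>
    SetLike.GradedSMul.smul_mem a.2 hxh
  have hkey : ∀ (a : A) (g : ι),
      (DirectSum.decompose ℰ (a • x) (g + h) : E) = (DirectSum.decompose 𝒜 a g : A) • x := by
    refine DirectSum.Decomposition.inductionOn 𝒜 ?_ ?_ ?_
    · intro g; simp
    · intro i a g
      rcases eq_or_ne g i with rfl | hgi
      · rw [DirectSum.decompose_of_mem_same ℰ (hsmul_mem a),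
          DirectSum.decompose_of_mem_same 𝒜 a.2]
      · rw [DirectSum.decompose_of_mem_ne ℰ (hsmul_mem a)
            (fun hc => hgi (add_right_cancel hc).symm),
          DirectSum.decompose_of_mem_ne 𝒜 a.2 (Ne.symm hgi), zero_smul]
    · intro a b ha hb g
      rw [add_smul, DirectSum.decompose_add, DirectSum.decompose_add, DirectSum.add_apply,
        DirectSum.add_apply, AddSubgroup.coe_add, AddSubgroup.coe_add, ha, hb, add_smul]
  have hkey2 : ∀ (a : A) (g : ι),
      (DirectSum.decompose ℰ (a • x) g : E) ∈ Submodule.span A {x} := by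
    refine DirectSum.Decomposition.inductionOn 𝒜 ?_ ?_ ?_
    · intro g; simp
    · intro i a g
      rcases eq_or_ne g (i + h) with rfl | hgi
      · rw [DirectSum.decompose_of_mem_same ℰ (hsmul_mem a)]
        exact Submodule.mem_span_singleton.mpr ⟨a, rfl⟩
      · rw [DirectSum.decompose_of_mem_ne ℰ (hsmul_mem a) (Ne.symm hgi)]
        exact Submodule.zero_mem _
    · intro a b ha hb g
      rw [add_smul, DirectSum.decompose_add, DirectSum.add_apply, AddSubgroup.coe_add]
      exact Submodule.add_mem _ (ha g) (hb g)
  -- J is a homogeneous prime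
  have hJne : J ≠ ⊤ := by
    intro hc
    apply hxN
    have : (1 : A) ∈ J := hc ▸ Submodule.mem_top
    simpa using (hmemJ 1).mp this
  have hJhom : Ideal.IsHomogeneous 𝒜 J := by
    intro g a haJ
    rw [hmemJ]
    rw [← hkey a g]
    exact hNgr _ ((hmemJ a).mp haJ) (g + h)
  have hJprime : Ideal.IsPrime J := by
    refine Ideal.IsHomogeneous.isPrime_of_homogeneous_mem_or_mem (𝒜 := 𝒜) hJhom hJne ?_
    intro c d hc hd hcd
    by_contra hcon
    push_neg at hcon
    obtain ⟨hcJ, hdJ⟩ := hcon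
    obtain ⟨j, hdj⟩ := hd
    have hdx : d • x ∈ ℰ (j + h) := SetLike.GradedSMul.smul_mem hdj hxh
    have hdxN : d • x ∉ N := fun hh => hdJ ((hmemJ d).mpr hh)
    set J' : Ideal A := Submodule.comap (LinearMap.toSpanSingleton A E (d • x)) N with hJ'def
    have hJ'T : J' ∈ T := ⟨j + h, d • x, hdx, hdxN, rfl⟩
    have hle : J ≤ J' := by
      intro a haJ
      show a • (d • x) ∈ N
      rw [smul_comm]
      exact N.smul_mem d ((hmemJ a).mp haJ)
    have hcJ' : c ∈ J' := by
      show c • (d • x) ∈ N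
      rw [smul_smul]
      exact (hmemJ _).mp hcd
    exact hJmax J' hJ'T (lt_of_le_of_ne hle (fun hq => hcJ (hq ▸ hcJ')))
  -- the bigger submodule
  set N' : Submodule A E := N ⊔ Submodule.span A {x} with hN'def
  have hxN' : x ∈ N' := Submodule.mem_sup_right (Submodule.mem_span_singleton_self x)
  have hNN' : N < N' := lt_of_le_of_ne le_sup_left (fun hq => hxN (hq ▸ hxN'))
  -- quotient iso  N'/N ≃ A/J
  have hiso : Nonempty ((↥N' ⧸ (Submodule.comap N'.subtype N)) ≃ₗ[A] (A ⧸ J)) := by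
    set xb : E ⧸ N := Submodule.Quotient.mk x with hxb
    let f : ↥N' →ₗ[A] E ⧸ N := N.mkQ.comp N'.subtype
    have hker : LinearMap.ker f = Submodule.comap N'.subtype N := by
      rw [LinearMap.ker_comp, Submodule.ker_mkQ]
    have hmapN : Submodule.map N.mkQ N = ⊥ := by
      ext z
      simp only [Submodule.mem_map, Submodule.mem_bot]
      constructor
      · rintro ⟨w, hw, rfl⟩
        exact (Submodule.Quotient.mk_eq_zero N).mpr hw
      · rintro rfl
        exact ⟨0, N.zero_mem, rfl⟩
    have hrange : LinearMap.range f = Submodule.span A {xb} := by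
      rw [LinearMap.range_comp, Submodule.range_subtype, hN'def, Submodule.map_sup, hmapN,
        Submodule.map_span, Set.image_singleton, bot_sup_eq]
      rfl
    have htor : Ideal.torsionOf A (E ⧸ N) xb = J := by
      ext a
      rw [Ideal.mem_torsionOf_iff, hmemJ, hxb, ← Submodule.Quotient.mk_smul,
        Submodule.Quotient.mk_eq_zero]
    exact ⟨(Submodule.quotEquivOfEq _ _ hker.symm).trans <|
      (f.quotKerEquivRange).trans <|
      (LinearEquiv.ofEq _ _ hrange).trans <|
      ((Ideal.quotTorsionOfEquivSpanSingleton A (E ⧸ N) xb).symm.trans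
        (Submodule.quotEquivOfEq _ _ htor))⟩
  -- N' is Good
  have hGoodN' : Good N' := by
    constructor
    · intro z hz g
      obtain ⟨y, hyN, w, hw, rfl⟩ := Submodule.mem_sup.mp hz
      obtain ⟨a, rfl⟩ := Submodule.mem_span_singleton.mp hw
      rw [DirectSum.decompose_add, DirectSum.add_apply, AddSubgroup.coe_add]
      exact N'.add_mem (Submodule.mem_sup_left (hNgr y hyN g)) (Submodule.mem_sup_right (hkey2 a g))
    · refine ⟨n + 1, Fin.snoc M N', ?_, ?_, ?_, ?_⟩
      · refine Fin.monotone_iff_le_succ.mpr ?_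
        intro i
        induction i using Fin.lastCases with
        | last =>
          rw [Fin.succ_last, Fin.snoc_last, Fin.snoc_castSucc, hM3]
          exact le_of_lt hNN'
        | cast j =>
          rw [Fin.succ_castSucc, Fin.snoc_castSucc, Fin.snoc_castSucc]
          exact hM1 (le_of_lt (Fin.castSucc_lt_succ (i := j)))
      · rw [← Fin.castSucc_zero, Fin.snoc_castSucc]
        exact hM2
      · rw [Fin.snoc_last]
      · intro i
        induction i using Fin.lastCases with
        | last =>
          refine ⟨J, hJprime, hJhom, ?_⟩
          rw [Fin.succ_last, Fin.snoc_last, Fin.snoc_castSucc, hM3]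
          exact hiso
        | cast j =>
          obtain ⟨𝔭, hp1, hp2, hp3⟩ := hM4 j
          refine ⟨𝔭, hp1, hp2, ?_⟩
          rw [Fin.succ_castSucc, Fin.snoc_castSucc, Fin.snoc_castSucc]
          exact hp3
  exact hNmax N' hGoodN' hNN'



/-- **Prime Filtration Theorem.** Let `P` be a finitely generated torsion-free commutative
cancellative monoid (realized as a submonoid of its Grothendieck group `G = P^gp`), let
`A = ⊕_{p ∈ P} A_p` be a Noetherian `P`-graded ring (graded by `G` with trivial components
outside `P`), and let `E = ⊕_{g ∈ G} E_g` be a finitely generated `P^gp`-graded `A`-module.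
Then `E` has a filtration `0 = E₀ ⊂ E₁ ⊂ ⋯ ⊂ E_n = E` with each `Eᵢ/Eᵢ₋₁ ≅ A/𝔭ᵢ` for
homogeneous prime ideals `𝔭ᵢ ⊂ A`. -/
theorem graded_prime_filtration
    {G : Type*} [AddCommGroup G] [DecidableEq G] (P : AddSubmonoid G) (hfg : P.FG)
    (htf : ∀ (n : ℕ) (g : G), 0 < n → n • g = 0 → g = 0)
    (A : Type*) [CommRing A] [IsNoetherianRing A]
    (𝒜 : G → AddSubgroup A) [GradedRing 𝒜]
    (hP : ∀ g : G, g ∉ P → 𝒜 g = ⊥)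
    (E : Type*) [AddCommGroup E] [Module A E] [Module.Finite A E]
    (ℰ : G → AddSubgroup E) [SetLike.GradedSMul 𝒜 ℰ] [DirectSum.Decomposition ℰ] :
    ∃ (n : ℕ) (M : Fin (n + 1) → Submodule A E), Monotone M ∧
      M 0 = ⊥ ∧ M (Fin.last n) = ⊤ ∧
      ∀ i : Fin n, ∃ 𝔭 : Ideal A, 𝔭.IsPrime ∧ Ideal.IsHomogeneous 𝒜 𝔭 ∧
        Nonempty ((↥(M i.succ) ⧸ (Submodule.comap (M i.succ).subtype (M i.castSucc)))
          ≃ₗ[A] (A ⧸ 𝔭)) := by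
  obtain ⟨C, hC0, hCt⟩ := exists_total_cone htf
  letI lo : LinearOrder G :=
  { le := fun a b => b - a ∈ C
    le_refl := fun a => by simpa using zero_mem C
    le_trans := fun a b c hab hbc => by
      have := add_mem hbc hab
      simpa using this
    le_antisymm := fun a b hab hba => by
      have : b - a = 0 := hC0 _ hab (by simpa using hba)
      exact (sub_eq_zero.mp this).symm
    le_total := fun a b => by
      rcases hCt (b - a) with h | h
      · exact Or.inl h
      · exact Or.inr (by simpa using h)
    toDecidableLE := Classical.decRel _ }
  haveI : IsOrderedCancelAddMonoid G :=
  { add_le_add_left := fun a b hab c => by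
      show b + c - (a + c) ∈ C
      rwa [add_sub_add_right_eq_sub]
    le_of_add_le_add_left := fun a b c h => by
      have h' : (a + c) - (a + b) ∈ C := h
      show c - b ∈ C
      simpa [add_sub_add_left_eq_sub] using h' }
  exact aux_graded_prime_filtration A 𝒜 E ℰ
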